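/- Let 1 < p < +∞. For every analytic function f on the unit disc 𝔻 with ρ_{p,∞}(f) < ∞ there exists a sequence {f_n} of analytic functions, each belonging to RM(p,0), such that ρ_{p,p}(f_n - f) → 0 as n → ∞ and limsup_n ρ_{p,∞}(f_n) ≤ ρ_{p,∞}(f). -/

import Mathlib

open MeasureTheory Metric Set Filter
open scoped ENNReal

/-- The point `r e^{iθ}` of the complex plane. -/
noncomputable def circ (r θ : ℝ) : ℂ := r * Complex.exp (θ * Complex.I)

/-- `ρ_{p,∞}(h) = sup_θ (∫₀¹ |h(re^{iθ})|^p dr)^{1/p}` (with values in `ℝ≥0∞`). -/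
noncomputable def rhoInf (p : ℝ) (h : ℂ → ℂ) : ℝ≥0∞ :=
  ⨆ θ : ℝ, (∫⁻ r in Ioc (0:ℝ) 1, ENNReal.ofReal (‖h (circ r θ)‖ ^ p)) ^ (1/p)

/-- The Bergman-type norm
`ρ_{p,p}(h) = ((1/2π) ∫₀^{2π} ∫₀¹ |h(re^{iθ})|^p dr dθ)^{1/p}`. -/
noncomputable def rhoPP (p : ℝ) (h : ℂ → ℂ) : ℝ≥0∞ :=
  (ENNReal.ofReal (1/(2*Real.pi)) *
    ∫⁻ θ in Ioc (0:ℝ) (2*Real.pi),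
      ∫⁻ r in Ioc (0:ℝ) 1, ENNReal.ofReal (‖h (circ r θ)‖ ^ p)) ^ (1/p)

/-- `f` belongs to `RM(p,0)`: `f` is analytic on the unit disc and
`lim_{ρ→1⁻} sup_θ (∫_ρ¹ |f(re^{iθ})|^p dr)^{1/p} = 0`. -/
def memRMp0 (p : ℝ) (f : ℂ → ℂ) : Prop :=
  DifferentiableOn ℂ f (ball (0:ℂ) 1) ∧
    Tendsto (fun ρ : ℝ => ⨆ θ : ℝ,
        (∫⁻ r in Ioc ρ 1, ENNReal.ofReal (‖f (circ r θ)‖ ^ p)) ^ (1/p))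
      (nhdsWithin 1 (Iio (1:ℝ))) (nhds 0)

/- ## Auxiliary lemmas -/

lemma norm_circ (r θ : ℝ) : ‖circ r θ‖ = |r| := by
  simp [circ, Complex.norm_exp_ofReal_mul_I, Complex.norm_real]

lemma circ_smul (b r θ : ℝ) : (b : ℂ) * circ r θ = circ (b * r) θ := by
  unfold circ; push_cast; ring

lemma continuous_circ2 : Continuous fun q : ℝ × ℝ => circ q.2 q.1 := by
  unfold circ
  exact (Complex.continuous_ofReal.comp continuous_snd).mul
    (Complex.continuous_exp.comp ((Complex.continuous_ofReal.comp continuous_fst).mul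
      continuous_const))

/-- The indicator of a continuous-on function over an open set is measurable. -/
lemma aux_measurable_indicator {X E : Type*} [TopologicalSpace X] [MeasurableSpace X]
    [OpensMeasurableSpace X] [TopologicalSpace E] [MeasurableSpace E] [BorelSpace E] [Zero E]
    {s : Set X} (hs : IsOpen s) {h : X → E} (hh : ContinuousOn h s) :
    Measurable (s.indicator h) := by
  intro t ht
  have hrm : Measurable (s.restrict h) :=
    (continuousOn_iff_continuous_restrict.1 hh).measurable
  have h1 : MeasurableSet (Subtype.val '' (s.restrict h ⁻¹' t)) :=
    (MeasurableEmbedding.subtype_coe hs.measurableSet).measurableSet_image.2 (hrm ht)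
  have key : s.indicator h ⁻¹' t =
      (Subtype.val '' (s.restrict h ⁻¹' t)) ∪ {x | x ∉ s ∧ (0 : E) ∈ t} := by
    ext x
    by_cases hx : x ∈ s
    · simp only [Set.mem_preimage, Set.indicator_of_mem hx, Set.mem_union, Set.mem_setOf_eq,
        hx, not_true, false_and, or_false]
      constructor
      · intro hxt; exact ⟨⟨x, hx⟩, by simpa [Set.restrict] using hxt, rfl⟩
      · rintro ⟨⟨y, hy⟩, hyt, rfl⟩; simpa [Set.restrict] using hyt
    · simp only [Set.mem_preimage, Set.indicator_of_notMem hx, Set.mem_union, Set.mem_setOf_eq,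
        hx, not_false_iff, true_and]
      constructor
      · intro h0; right; exact h0
      · rintro (⟨⟨y, hy⟩, hyt, rfl⟩ | h0)
        · exact absurd hy hx
        · exact h0
  rw [key]
  refine h1.union ?_
  by_cases h0 : (0 : E) ∈ t
  · have : {x | x ∉ s ∧ (0 : E) ∈ t} = sᶜ := by ext x; simp [h0]
    rw [this]; exact hs.measurableSet.compl
  · have : {x | x ∉ s ∧ (0 : E) ∈ t} = ∅ := by ext x; simp [h0]
    rw [this]; exact MeasurableSet.empty

/-- Scaling substitution for the lower Lebesgue integral over `Ioc`, with an
arbitrary integrand. -/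
lemma aux_lintegral_scale {a : ℝ} (ha : 0 < a) (g : ℝ → ℝ≥0∞) (c d : ℝ) :
    ∫⁻ r in Ioc c d, g (a * r) = ENNReal.ofReal a⁻¹ * ∫⁻ s in Ioc (a*c) (a*d), g s := by
  have hane : a ≠ 0 := ha.ne'
  have hind : ∀ r : ℝ, (Ioc c d).indicator (fun r => g (a * r)) r
      = (Ioc (a*c) (a*d)).indicator g (a * r) := by
    intro r
    by_cases hr : r ∈ Ioc c d
    · rw [Set.indicator_of_mem hr, Set.indicator_of_mem]
      exact ⟨by exact (mul_lt_mul_iff_right₀ ha).2 hr.1, (mul_le_mul_iff_right₀ ha).2 hr.2⟩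
    · rw [Set.indicator_of_notMem hr, Set.indicator_of_notMem]
      intro hmem
      exact hr ⟨(mul_lt_mul_iff_right₀ ha).1 hmem.1, (mul_le_mul_iff_right₀ ha).1 hmem.2⟩
  calc ∫⁻ r in Ioc c d, g (a * r)
      = ∫⁻ r, (Ioc c d).indicator (fun r => g (a * r)) r := by
        rw [lintegral_indicator measurableSet_Ioc]
    _ = ∫⁻ r, (Ioc (a*c) (a*d)).indicator g (MeasurableEquiv.mulLeft₀ a hane r) := by
        refine lintegral_congr fun r => ?_
        rw [hind r, MeasurableEquiv.coe_mulLeft₀ hane]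
    _ = ∫⁻ y, (Ioc (a*c) (a*d)).indicator g y
          ∂(Measure.map (MeasurableEquiv.mulLeft₀ a hane) volume) :=
        (MeasureTheory.lintegral_map_equiv _ (MeasurableEquiv.mulLeft₀ a hane)).symm
    _ = ENNReal.ofReal a⁻¹ * ∫⁻ s in Ioc (a*c) (a*d), g s := by
        have : Measure.map (MeasurableEquiv.mulLeft₀ a hane) volume
            = ENNReal.ofReal |a⁻¹| • volume := by
          rw [show (⇑(MeasurableEquiv.mulLeft₀ a hane) : ℝ → ℝ) = (a * ·) from
            MeasurableEquiv.coe_mulLeft₀ hane]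
          exact Real.map_volume_mul_left hane
        rw [this, lintegral_smul_measure, lintegral_indicator measurableSet_Ioc,
          abs_of_pos (inv_pos.2 ha), smul_eq_mul]

lemma aux_G_meas (p : ℝ) (hp0 : 0 ≤ p) {h : ℂ → ℂ} (hh : ContinuousOn h (ball (0:ℂ) 1)) :
    Measurable fun q : ℝ × ℝ =>
      if |q.2| < 1 then ENNReal.ofReal (‖h (circ q.2 q.1)‖ ^ p) else 0 := by
  have hU : IsOpen {q : ℝ × ℝ | |q.2| < 1} :=
    isOpen_lt (continuous_snd.abs) continuous_const
  have hmaps : MapsTo (fun q : ℝ × ℝ => circ q.2 q.1) {q : ℝ × ℝ | |q.2| < 1} (ball (0:ℂ) 1) := by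
    intro q hq
    rw [mem_ball_zero_iff, norm_circ]
    exact hq
  have hcont : ContinuousOn (fun q : ℝ × ℝ => ENNReal.ofReal (‖h (circ q.2 q.1)‖ ^ p))
      {q : ℝ × ℝ | |q.2| < 1} := by
    refine ENNReal.continuous_ofReal.comp_continuousOn ?_
    refine (Real.continuous_rpow_const hp0).comp_continuousOn ?_
    exact (hh.comp continuous_circ2.continuousOn hmaps).norm
  have heq : (fun q : ℝ × ℝ =>
      if |q.2| < 1 then ENNReal.ofReal (‖h (circ q.2 q.1)‖ ^ p) else 0)
      = ({q : ℝ × ℝ | |q.2| < 1}).indicator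
        (fun q => ENNReal.ofReal (‖h (circ q.2 q.1)‖ ^ p)) := by
    funext q; rw [Set.indicator_apply]; rfl
  rw [heq]
  exact aux_measurable_indicator hU hcont

lemma aux_inner_eq (p : ℝ) (h : ℂ → ℂ) {S : Set ℝ} (hS : MeasurableSet S)
    (hsub : S ⊆ Ioc (0:ℝ) 1) (θ : ℝ) :
    ∫⁻ r in S, ENNReal.ofReal (‖h (circ r θ)‖ ^ p)
      = ∫⁻ r in S, (if |r| < 1 then ENNReal.ofReal (‖h (circ r θ)‖ ^ p) else 0) := by
  refine lintegral_congr_ae ?_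
  have h1 : ∀ᵐ r ∂(volume.restrict S), r ∈ S := ae_restrict_mem hS
  have h2 : ∀ᵐ r ∂(volume.restrict S), r ≠ 1 := by
    rw [ae_iff]
    have hset : {r : ℝ | ¬ r ≠ 1} = {(1:ℝ)} := by ext r; simp
    rw [hset, Measure.restrict_apply (measurableSet_singleton 1)]
    exact le_antisymm ((measure_mono (Set.inter_subset_left)).trans_eq
      Real.volume_singleton) zero_le
  filter_upwards [h1, h2] with r hrS hr1
  have habs : |r| < 1 := by
    have h01 := hsub hrS
    exact abs_lt.2 ⟨by linarith [h01.1], lt_of_le_of_ne h01.2 hr1⟩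
  simp [habs]

/-- The tail of the Bergman-type double integral is small. -/
lemma aux_tail (p : ℝ) (hp0 : 0 ≤ p) {f : ℂ → ℂ} (hf : ContinuousOn f (ball (0:ℂ) 1))
    {Rp : ℝ≥0∞} (hRp : Rp ≠ ⊤)
    (hbound : ∀ θ : ℝ, ∫⁻ r in Ioc (0:ℝ) 1, ENNReal.ofReal (‖f (circ r θ)‖ ^ p) ≤ Rp)
    {ε : ℝ≥0∞} (hε : 0 < ε) :
    ∃ ρ : ℝ, 0 < ρ ∧ ρ < 1 ∧
      (∫⁻ θ in Ioc (0:ℝ) (2*Real.pi),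
        ∫⁻ r in Ioc ρ 1, ENNReal.ofReal (‖f (circ r θ)‖ ^ p)) < ε := by
  set G : ℝ × ℝ → ℝ≥0∞ :=
    fun q => if |q.2| < 1 then ENNReal.ofReal (‖f (circ q.2 q.1)‖ ^ p) else 0 with hG_def
  have hG : Measurable G := aux_G_meas p hp0 hf
  set ν : Measure (ℝ × ℝ) := (volume.prod volume).withDensity G with hν_def
  have hν : ∀ ρ : ℝ, 0 ≤ ρ →
      (∫⁻ θ in Ioc (0:ℝ) (2*Real.pi), ∫⁻ r in Ioc ρ 1, ENNReal.ofReal (‖f (circ r θ)‖ ^ p))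
        = ν ((Ioc (0:ℝ) (2*Real.pi)) ×ˢ (Ioc ρ 1)) := by
    intro ρ hρ
    rw [hν_def, withDensity_apply _ (measurableSet_Ioc.prod measurableSet_Ioc),
      ← Measure.prod_restrict, lintegral_prod _ hG.aemeasurable]
    exact lintegral_congr fun θ =>
      aux_inner_eq p f measurableSet_Ioc (Ioc_subset_Ioc_left hρ) θ
  have hfin : ν ((Ioc (0:ℝ) (2*Real.pi)) ×ˢ (Ioc (0:ℝ) 1)) ≠ ⊤ := by
    rw [← hν 0 le_rfl]
    refine ne_top_of_le_ne_top
      (ENNReal.mul_ne_top hRp (ENNReal.ofReal_ne_top (r := 2*Real.pi))) ?_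
    calc (∫⁻ θ in Ioc (0:ℝ) (2*Real.pi),
          ∫⁻ r in Ioc (0:ℝ) 1, ENNReal.ofReal (‖f (circ r θ)‖ ^ p))
        ≤ ∫⁻ _ in Ioc (0:ℝ) (2*Real.pi), Rp := lintegral_mono_ae
          (Filter.Eventually.of_forall fun θ => hbound θ)
      _ = Rp * volume (Ioc (0:ℝ) (2*Real.pi)) := setLIntegral_const _ _
      _ ≤ Rp * ENNReal.ofReal (2*Real.pi) := by rw [Real.volume_Ioc, sub_zero]
  -- the decreasing sequence of boxes
  set ρs : ℕ → ℝ := fun k => 1 - ((k:ℝ)+2)⁻¹ with hρs_def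
  have hρs_pos : ∀ k, 0 < ρs k := by
    intro k
    have h2 : (2:ℝ) ≤ (k:ℝ)+2 := by
      have := Nat.cast_nonneg (α := ℝ) k
      linarith
    have hinv : ((k:ℝ)+2)⁻¹ ≤ 2⁻¹ := inv_anti₀ (by norm_num) h2
    have : ((k:ℝ)+2)⁻¹ < 1 := lt_of_le_of_lt hinv (by norm_num)
    simp only [hρs_def]; linarith
  have hρs_lt : ∀ k, ρs k < 1 := by
    intro k
    have : 0 < ((k:ℝ)+2)⁻¹ := by positivity
    simp only [hρs_def]; linarith
  set s : ℕ → Set (ℝ × ℝ) := fun k => (Ioc (0:ℝ) (2*Real.pi)) ×ˢ (Ioc (ρs k) 1) with hs_def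
  have hanti : Antitone s := by
    intro k m hkm
    refine Set.prod_mono_right (Ioc_subset_Ioc_left ?_)
    have : ((m:ℝ)+2)⁻¹ ≤ ((k:ℝ)+2)⁻¹ := by
      apply inv_anti₀ (by positivity)
      have : (k:ℝ) ≤ m := Nat.cast_le.2 hkm
      linarith
    simp only [hρs_def]; linarith
  have hInter : ⋂ k, s k = (Ioc (0:ℝ) (2*Real.pi)) ×ˢ ({1} : Set ℝ) := by
    simp only [hs_def]
    rw [← Set.prod_iInter]
    congr 1
    ext x
    simp only [Set.mem_iInter, Set.mem_Ioc, Set.mem_singleton_iff]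
    constructor
    · intro hx
      by_contra hne
      have hx1 : x < 1 := lt_of_le_of_ne (hx 0).2 hne
      obtain ⟨n, hn⟩ := exists_nat_gt (1-x)⁻¹
      have h1x : 0 < 1 - x := by linarith
      have hn2 : (1-x)⁻¹ < (n:ℝ) + 2 := by linarith [hn]
      have : ((n:ℝ)+2)⁻¹ < 1 - x :=
        (inv_lt_comm₀ h1x (by positivity)).1 hn2
      have := (hx n).1
      simp only [hρs_def] at this
      linarith
    · rintro rfl
      exact fun k => ⟨hρs_lt k, le_rfl⟩
  have hsing : ν ((Ioc (0:ℝ) (2*Real.pi)) ×ˢ ({1} : Set ℝ)) = 0 := by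
    rw [hν_def, withDensity_apply _ (measurableSet_Ioc.prod (measurableSet_singleton 1))]
    have hz : (volume.prod volume) ((Ioc (0:ℝ) (2*Real.pi)) ×ˢ ({1} : Set ℝ)) = 0 := by
      rw [Measure.prod_prod, Real.volume_singleton, mul_zero]
    rw [Measure.restrict_eq_zero.2 hz, lintegral_zero_measure]
  have htends : Tendsto (ν ∘ s) atTop (nhds 0) := by
    have := tendsto_measure_iInter_atTop (μ := ν)
      (fun k => ((measurableSet_Ioc.prod measurableSet_Ioc)).nullMeasurableSet)
      hanti ⟨0, by
        refine ne_top_of_le_ne_top hfin (measure_mono ?_)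
        exact Set.prod_mono_right (Ioc_subset_Ioc_left (hρs_pos 0).le)⟩
    rwa [hInter, hsing] at this
  have hev : ∀ᶠ k in atTop, ν (s k) < ε := (tendsto_order.1 htends).2 ε hε
  obtain ⟨k, hk⟩ := hev.exists
  exact ⟨ρs k, hρs_pos k, hρs_lt k, by rw [hν (ρs k) (hρs_pos k).le]; exact hk⟩

/-- Pointwise bound `‖x-y‖^p ≤ 2^p ‖x‖^p + 2^p ‖y‖^p`. -/
lemma aux_diff_bound (p : ℝ) (hp0 : 0 ≤ p) (x y : ℂ) :
    ENNReal.ofReal (‖x - y‖ ^ p) ≤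
      ENNReal.ofReal (2 ^ p) * ENNReal.ofReal (‖x‖ ^ p)
        + ENNReal.ofReal (2 ^ p) * ENNReal.ofReal (‖y‖ ^ p) := by
  have key : ‖x - y‖ ^ p ≤ 2 ^ p * ‖x‖ ^ p + 2 ^ p * ‖y‖ ^ p := by
    have h1 : ‖x - y‖ ≤ 2 * max ‖x‖ ‖y‖ := by
      calc ‖x - y‖ ≤ ‖x‖ + ‖y‖ := norm_sub_le x y
        _ ≤ 2 * max ‖x‖ ‖y‖ := by
          rcases le_total ‖x‖ ‖y‖ with h | h
          · rw [max_eq_right h]; linarith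
          · rw [max_eq_left h]; linarith
    have h2 : ‖x - y‖ ^ p ≤ (2 * max ‖x‖ ‖y‖) ^ p :=
      Real.rpow_le_rpow (norm_nonneg _) h1 hp0
    have h3 : (2 * max ‖x‖ ‖y‖) ^ p = 2 ^ p * max ‖x‖ ‖y‖ ^ p :=
      Real.mul_rpow (by norm_num) (le_max_iff.2 (Or.inl (norm_nonneg _)))
    have h4 : max ‖x‖ ‖y‖ ^ p ≤ ‖x‖ ^ p + ‖y‖ ^ p := by
      rcases le_total ‖x‖ ‖y‖ with h | h
      · rw [max_eq_right h]
        have := Real.rpow_nonneg (norm_nonneg x) p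
        linarith
      · rw [max_eq_left h]
        have := Real.rpow_nonneg (norm_nonneg y) p
        linarith
    have h5 : 0 ≤ (2:ℝ) ^ p := Real.rpow_nonneg (by norm_num) p
    calc ‖x - y‖ ^ p ≤ 2 ^ p * max ‖x‖ ‖y‖ ^ p := by rw [← h3]; exact h2
      _ ≤ 2 ^ p * (‖x‖ ^ p + ‖y‖ ^ p) := by nlinarith
      _ = 2 ^ p * ‖x‖ ^ p + 2 ^ p * ‖y‖ ^ p := by ring
  calc ENNReal.ofReal (‖x - y‖ ^ p)
      ≤ ENNReal.ofReal (2 ^ p * ‖x‖ ^ p + 2 ^ p * ‖y‖ ^ p) := ENNReal.ofReal_le_ofReal key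
    _ ≤ ENNReal.ofReal (2 ^ p * ‖x‖ ^ p) + ENNReal.ofReal (2 ^ p * ‖y‖ ^ p) :=
        ENNReal.ofReal_add_le
    _ = ENNReal.ofReal (2 ^ p) * ENNReal.ofReal (‖x‖ ^ p)
        + ENNReal.ofReal (2 ^ p) * ENNReal.ofReal (‖y‖ ^ p) := by
        rw [ENNReal.ofReal_mul (Real.rpow_nonneg (by norm_num) p),
          ENNReal.ofReal_mul (Real.rpow_nonneg (by norm_num) p)]

set_option maxHeartbeats 1000000 in
/-- Let `1 < p < ∞`. For every analytic `f` on the disc with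
`ρ_{p,∞}(f) < ∞` there is a sequence `{f_n} ⊂ RM(p,0)` with `ρ_{p,p}(f_n - f) → 0` and
`limsup_n ρ_{p,∞}(f_n) ≤ ρ_{p,∞}(f)`. -/
theorem stmt7 (p : ℝ) (hp : 1 < p) (f : ℂ → ℂ)
    (hf : DifferentiableOn ℂ f (ball (0:ℂ) 1)) (hfin : rhoInf p f ≠ ⊤) :
    ∃ F : ℕ → ℂ → ℂ,
      (∀ n, memRMp0 p (F n)) ∧
      Tendsto (fun n => rhoPP p (fun z => F n z - f z)) atTop (nhds 0) ∧
      Filter.limsup (fun n => rhoInf p (F n)) atTop ≤ rhoInf p f := by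
  have hppos : 0 < p := lt_trans zero_lt_one hp
  have hp0 : 0 ≤ p := hppos.le
  have hq : 0 < 1/p := by positivity
  -- dilation parameters
  set a : ℕ → ℝ := fun n => 1 - ((n:ℝ)+2)⁻¹ with ha_def
  have ha0 : ∀ n, 0 < a n := by
    intro n
    have h2 : (2:ℝ) ≤ (n:ℝ)+2 := by
      have := Nat.cast_nonneg (α := ℝ) n
      linarith
    have hinv : ((n:ℝ)+2)⁻¹ ≤ 2⁻¹ := inv_anti₀ (by norm_num) h2
    have : ((n:ℝ)+2)⁻¹ < 1 := lt_of_le_of_lt hinv (by norm_num)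
    simp only [ha_def]; linarith
  have ha1 : ∀ n, a n < 1 := by
    intro n
    have : 0 < ((n:ℝ)+2)⁻¹ := by positivity
    simp only [ha_def]; linarith
  have hahalf : ∀ n, (1:ℝ)/2 ≤ a n := by
    intro n
    have h2 : (2:ℝ) ≤ (n:ℝ)+2 := by
      have := Nat.cast_nonneg (α := ℝ) n
      linarith
    have hinv : ((n:ℝ)+2)⁻¹ ≤ 2⁻¹ := inv_anti₀ (by norm_num) h2
    simp only [ha_def]
    rw [one_div]
    linarith
  have hato1 : Tendsto a atTop (nhds 1) := by
    have h1 : Tendsto (fun n : ℕ => ((n:ℝ)+2)⁻¹) atTop (nhds 0) := by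
      have := (tendsto_natCast_atTop_atTop (R := ℝ)).atTop_add tendsto_const_nhds (C := 2)
      exact this.inv_tendsto_atTop
    have h2 : Tendsto (fun _ : ℕ => (1:ℝ)) atTop (nhds 1) := tendsto_const_nhds
    simpa using h2.sub h1
  -- the approximating sequence
  set F : ℕ → ℂ → ℂ := fun n z => f ((a n : ℂ) * z) with hF_def
  have hFcirc : ∀ n (r θ : ℝ), F n (circ r θ) = f (circ (a n * r) θ) := by
    intro n r θ
    simp only [hF_def]
    rw [circ_smul]
  have hscale : ∀ (n : ℕ) (θ c d : ℝ),
      ∫⁻ r in Ioc c d, ENNReal.ofReal (‖F n (circ r θ)‖ ^ p)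
        = ENNReal.ofReal (a n)⁻¹
            * ∫⁻ s in Ioc (a n * c) (a n * d), ENNReal.ofReal (‖f (circ s θ)‖ ^ p) := by
    intro n θ c d
    rw [← aux_lintegral_scale (ha0 n) (fun s => ENNReal.ofReal (‖f (circ s θ)‖ ^ p)) c d]
    exact lintegral_congr fun r => by rw [hFcirc]
  -- basic bound from rhoInf
  have hRp_top : (rhoInf p f) ^ p ≠ ⊤ := ENNReal.rpow_ne_top_of_nonneg hp0 hfin
  have hIθ : ∀ θ : ℝ,
      ∫⁻ r in Ioc (0:ℝ) 1, ENNReal.ofReal (‖f (circ r θ)‖ ^ p) ≤ (rhoInf p f) ^ p := by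
    intro θ
    have h1 : (∫⁻ r in Ioc (0:ℝ) 1, ENNReal.ofReal (‖f (circ r θ)‖ ^ p)) ^ (1/p)
        ≤ rhoInf p f :=
      le_iSup (fun θ : ℝ =>
        (∫⁻ r in Ioc (0:ℝ) 1, ENNReal.ofReal (‖f (circ r θ)‖ ^ p)) ^ (1/p)) θ
    have h2 := ENNReal.rpow_le_rpow h1 hp0
    rwa [← ENNReal.rpow_mul, one_div, inv_mul_cancel₀ hppos.ne', ENNReal.rpow_one] at h2
  -- differentiability of the dilations
  have hFdiff : ∀ n, DifferentiableOn ℂ (F n) (ball (0:ℂ) 1) := by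
    intro n
    have hmaps : MapsTo (fun z : ℂ => (a n : ℂ) * z) (ball (0:ℂ) 1) (ball (0:ℂ) 1) := by
      intro z hz
      rw [mem_ball_zero_iff] at hz ⊢
      rw [norm_mul, Complex.norm_real, Real.norm_eq_abs, abs_of_pos (ha0 n)]
      nlinarith [norm_nonneg z, ha0 n, ha1 n]
    exact hf.comp ((differentiable_id.const_mul ((a n : ℂ))).differentiableOn) hmaps
  have hFcont : ∀ n, ContinuousOn (F n) (ball (0:ℂ) 1) := fun n => (hFdiff n).continuousOn
  refine ⟨F, ?_, ?_, ?_⟩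
  · -- each F n is in RM(p,0)
    intro n
    refine ⟨hFdiff n, ?_⟩
    obtain ⟨C, hC⟩ := (isCompact_closedBall (0:ℂ) (a n)).exists_bound_of_continuousOn
      (hf.continuousOn.mono (closedBall_subset_ball (ha1 n)))
    set C' := max C 0 with hC'_def
    have hC'0 : 0 ≤ C' := le_max_right _ _
    have hC' : ∀ x ∈ closedBall (0:ℂ) (a n), ‖f x‖ ≤ C' :=
      fun x hx => (hC x hx).trans (le_max_left _ _)
    set B := ENNReal.ofReal (C' ^ p) with hB_def
    have hBtop : B ≠ ⊤ := ENNReal.ofReal_ne_top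
    have hsup : ∀ ρ ∈ Ioo (0:ℝ) 1,
        (⨆ θ : ℝ, (∫⁻ r in Ioc ρ 1, ENNReal.ofReal (‖F n (circ r θ)‖ ^ p)) ^ (1/p))
          ≤ (B * ENNReal.ofReal (1-ρ)) ^ (1/p) := by
      intro ρ hρ
      refine iSup_le fun θ => ?_
      refine ENNReal.rpow_le_rpow ?_ hq.le
      calc ∫⁻ r in Ioc ρ 1, ENNReal.ofReal (‖F n (circ r θ)‖ ^ p)
          ≤ ∫⁻ _ in Ioc ρ 1, B := by
            refine lintegral_mono_ae (((ae_restrict_mem measurableSet_Ioc)).mono fun r hr => ?_)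
            rw [hFcirc]
            have hw : circ (a n * r) θ ∈ closedBall (0:ℂ) (a n) := by
              rw [mem_closedBall_zero_iff, norm_circ,
                abs_of_pos (mul_pos (ha0 n) (lt_trans hρ.1 hr.1))]
              nlinarith [hr.2, ha0 n, hρ.1, hr.1]
            rw [hB_def]
            exact ENNReal.ofReal_le_ofReal
              (Real.rpow_le_rpow (norm_nonneg _) (hC' _ hw) hp0)
        _ = B * volume (Ioc ρ 1) := setLIntegral_const _ _
        _ = B * ENNReal.ofReal (1-ρ) := by rw [Real.volume_Ioc]
    have hΦ : Tendsto (fun ρ : ℝ => (B * ENNReal.ofReal (1-ρ)) ^ (1/p))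
        (nhdsWithin 1 (Iio (1:ℝ))) (nhds 0) := by
      have h1 : Tendsto (fun ρ : ℝ => 1 - ρ) (nhdsWithin 1 (Iio (1:ℝ))) (nhds 0) := by
        have hcont : Continuous (fun ρ : ℝ => 1 - ρ) := continuous_const.sub continuous_id
        have := hcont.tendsto (1:ℝ)
        simp only [sub_self] at this
        exact this.mono_left nhdsWithin_le_nhds
      have h2 : Tendsto (fun ρ : ℝ => ENNReal.ofReal (1-ρ))
          (nhdsWithin 1 (Iio (1:ℝ))) (nhds 0) := by
        have := (ENNReal.continuous_ofReal.tendsto 0).comp h1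
        simpa [Function.comp_def] using this
      have h3 := ENNReal.Tendsto.const_mul h2 (Or.inr hBtop)
      rw [mul_zero] at h3
      have h4 := h3.ennrpow_const (1/p)
      rwa [ENNReal.zero_rpow_of_pos hq] at h4
    refine tendsto_of_tendsto_of_tendsto_of_le_of_le' tendsto_const_nhds hΦ
      (Eventually.of_forall fun ρ => zero_le) ?_
    filter_upwards [Ioo_mem_nhdsLT_of_mem (show (1:ℝ) ∈ Ioc (0:ℝ) 1 by constructor <;> norm_num)]
      with ρ hρ
    exact hsup ρ hρ
  · -- rho_pp convergence
    set Gf : ℝ × ℝ → ℝ≥0∞ :=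
      fun q => if |q.2| < 1 then ENNReal.ofReal (‖f (circ q.2 q.1)‖ ^ p) else 0 with hGf_def
    have hGf : Measurable Gf := aux_G_meas p hp0 hf.continuousOn
    have hD : Tendsto (fun n => ∫⁻ θ in Ioc (0:ℝ) (2*Real.pi), ∫⁻ r in Ioc (0:ℝ) 1,
        ENNReal.ofReal (‖F n (circ r θ) - f (circ r θ)‖ ^ p)) atTop (nhds 0) := by
      rw [ENNReal.tendsto_atTop_zero]
      intro ε hε
      by_cases hεtop : ε = ⊤
      · exact ⟨0, fun n _ => by rw [hεtop]; exact le_top⟩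
      set c2 := ENNReal.ofReal (2 ^ p) with hc2_def
      have hc2top : c2 ≠ ⊤ := ENNReal.ofReal_ne_top
      set K := 3 * c2 + 1 with hK_def
      have hK0 : K ≠ 0 := by simp [hK_def]
      have hKtop : K ≠ ⊤ :=
        ENNReal.add_ne_top.2 ⟨ENNReal.mul_ne_top (by norm_num) hc2top, by norm_num⟩
      have hδpos : 0 < (ε/2)/K := ENNReal.div_pos (ENNReal.half_pos hε.ne').ne' hKtop
      obtain ⟨ρ₁, hρ₁0, hρ₁1, hT⟩ :=
        aux_tail p hp0 hf.continuousOn hRp_top hIθ hδpos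
      set ρ := (1+ρ₁)/2 with hρ_def
      have hρ0 : 0 < ρ := by rw [hρ_def]; linarith
      have hρ1 : ρ < 1 := by rw [hρ_def]; linarith
      have hρρ₁ : ρ₁ < ρ := by rw [hρ_def]; linarith
      set W := ENNReal.ofReal ρ * ENNReal.ofReal (2*Real.pi) + 1 with hW_def
      have hW0 : W ≠ 0 := by simp [hW_def]
      have hWtop : W ≠ ⊤ :=
        ENNReal.add_ne_top.2
          ⟨ENNReal.mul_ne_top ENNReal.ofReal_ne_top ENNReal.ofReal_ne_top, by norm_num⟩
      set δ₂ := (ε/2)/W with hδ₂_def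
      have hδ₂pos : 0 < δ₂ := ENNReal.div_pos (ENNReal.half_pos hε.ne').ne' hWtop
      have hε2top : ε/2 ≠ ⊤ := (ENNReal.div_lt_top hεtop (by norm_num)).ne
      have hδ₂top : δ₂ ≠ ⊤ := by
        rw [hδ₂_def]
        exact (ENNReal.div_lt_top hε2top hW0).ne
      set m := δ₂.toReal with hm_def
      have hm : 0 < m := ENNReal.toReal_pos hδ₂pos.ne' hδ₂top
      set η := (m/2) ^ (1/p) with hη_def
      have hηpos : 0 < η := Real.rpow_pos_of_pos (by linarith) _
      have hηp : η ^ p = m/2 := by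
        rw [hη_def, ← Real.rpow_mul (by linarith : (0:ℝ) ≤ m/2), one_div,
          inv_mul_cancel₀ hppos.ne', Real.rpow_one]
      have hofηp : ENNReal.ofReal (η ^ p) ≤ δ₂ := by
        rw [hηp]
        calc ENNReal.ofReal (m/2) ≤ ENNReal.ofReal m := ENNReal.ofReal_le_ofReal (by linarith)
          _ = δ₂ := ENNReal.ofReal_toReal hδ₂top
      set ρ' := (1+ρ)/2 with hρ'_def
      have hρ'1 : ρ' < 1 := by rw [hρ'_def]; linarith
      have hρρ' : ρ ≤ ρ' := by rw [hρ'_def]; linarith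
      obtain ⟨δu, hδu0, hδu⟩ := Metric.uniformContinuousOn_iff.1
        ((isCompact_closedBall (0:ℂ) ρ').uniformContinuousOn_of_continuous
          (hf.continuousOn.mono (closedBall_subset_ball hρ'1))) η hηpos
      have hev1 : ∀ᶠ n in atTop, 1 - δu < a n :=
        hato1.eventually (eventually_gt_nhds (by linarith))
      have hev2 : ∀ᶠ n in atTop, ρ₁/ρ < a n :=
        hato1.eventually (eventually_gt_nhds ((div_lt_one hρ0).2 hρρ₁))
      obtain ⟨N, hN⟩ := eventually_atTop.1 (hev1.and hev2)
      refine ⟨N, fun n hn => ?_⟩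
      obtain ⟨hn1, hn2⟩ := hN n hn
      have haρ : ρ₁ ≤ a n * ρ := by
        rw [div_lt_iff₀ hρ0] at hn2
        nlinarith
      -- main term bound, per θ
      have hmain : ∀ θ : ℝ, (∫⁻ r in Ioc (0:ℝ) ρ,
          ENNReal.ofReal (‖F n (circ r θ) - f (circ r θ)‖ ^ p))
            ≤ ENNReal.ofReal (η ^ p) * ENNReal.ofReal ρ := by
        intro θ
        have hb : ∀ r ∈ Ioc (0:ℝ) ρ,
            ENNReal.ofReal (‖F n (circ r θ) - f (circ r θ)‖ ^ p)
              ≤ ENNReal.ofReal (η ^ p) := by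
          intro r hr
          have hzn : ‖circ r θ‖ = r := by rw [norm_circ]; exact abs_of_pos hr.1
          have hz : circ r θ ∈ closedBall (0:ℂ) ρ' := by
            rw [mem_closedBall_zero_iff, hzn]; linarith [hr.2]
          have hw : (a n : ℂ) * circ r θ ∈ closedBall (0:ℂ) ρ' := by
            rw [mem_closedBall_zero_iff, norm_mul, Complex.norm_real, Real.norm_eq_abs,
              abs_of_pos (ha0 n), hzn]
            nlinarith [ha0 n, ha1 n, hr.1, hr.2]
          have hdist : dist ((a n : ℂ) * circ r θ) (circ r θ) < δu := by
            rw [dist_eq_norm]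
            have heq : (a n : ℂ) * circ r θ - circ r θ = ((a n - 1 : ℝ) : ℂ) * circ r θ := by
              push_cast; ring
            rw [heq, norm_mul, Complex.norm_real, Real.norm_eq_abs, hzn,
              abs_of_nonpos (by linarith [ha1 n] : a n - 1 ≤ 0)]
            nlinarith [hr.1, hr.2, ha1 n, hn1, hρ1]
          have hlt : ‖F n (circ r θ) - f (circ r θ)‖ < η := by
            have := hδu _ hw _ hz hdist
            rw [dist_eq_norm] at this
            exact this
          exact ENNReal.ofReal_le_ofReal
            (Real.rpow_le_rpow (norm_nonneg _) hlt.le hp0)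
        calc (∫⁻ r in Ioc (0:ℝ) ρ, ENNReal.ofReal (‖F n (circ r θ) - f (circ r θ)‖ ^ p))
            ≤ ∫⁻ _ in Ioc (0:ℝ) ρ, ENNReal.ofReal (η ^ p) :=
              lintegral_mono_ae ((ae_restrict_mem measurableSet_Ioc).mono hb)
          _ = ENNReal.ofReal (η ^ p) * volume (Ioc (0:ℝ) ρ) := setLIntegral_const _ _
          _ = ENNReal.ofReal (η ^ p) * ENNReal.ofReal ρ := by
              rw [Real.volume_Ioc, sub_zero]
      -- tail term bound, per θ
      have hGFn : Measurable fun q : ℝ × ℝ =>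
          if |q.2| < 1 then ENNReal.ofReal (‖F n (circ q.2 q.1)‖ ^ p) else 0 :=
        aux_G_meas p hp0 (hFcont n)
      have htail : ∀ θ : ℝ, (∫⁻ r in Ioc ρ 1,
          ENNReal.ofReal (‖F n (circ r θ) - f (circ r θ)‖ ^ p))
            ≤ K * ∫⁻ r in Ioc ρ₁ 1, Gf (θ, r) := by
        intro θ
        have hae1 : ∀ᵐ r ∂(volume.restrict (Ioc ρ 1)), r ≠ 1 := by
          rw [ae_iff]
          have hset : {r : ℝ | ¬ r ≠ 1} = {(1:ℝ)} := by ext r; simp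
          rw [hset, Measure.restrict_apply (measurableSet_singleton 1)]
          exact le_antisymm ((measure_mono (Set.inter_subset_left)).trans_eq
            Real.volume_singleton) zero_le
        have e1 : (∫⁻ r in Ioc ρ 1, ENNReal.ofReal (‖F n (circ r θ) - f (circ r θ)‖ ^ p))
            ≤ ∫⁻ r in Ioc ρ 1,
                (c2 * (if |r| < 1 then ENNReal.ofReal (‖F n (circ r θ)‖ ^ p) else 0)
                  + c2 * Gf (θ, r)) := by
          refine lintegral_mono_ae ?_
          filter_upwards [ae_restrict_mem measurableSet_Ioc, hae1] with r hr hr1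
          have habs : |r| < 1 := abs_lt.2 ⟨by linarith [hr.1, hρ0], lt_of_le_of_ne hr.2 hr1⟩
          have hGfr : Gf (θ, r) = ENNReal.ofReal (‖f (circ r θ)‖ ^ p) := by
            simp only [hGf_def]
            exact if_pos habs
          rw [hGfr, if_pos habs, hc2_def]
          exact aux_diff_bound p hp0 _ _
        have hm1 : Measurable fun r : ℝ =>
            (if |r| < 1 then ENNReal.ofReal (‖F n (circ r θ)‖ ^ p) else 0) :=
          hGFn.comp measurable_prodMk_left
        have hm2 : Measurable fun r : ℝ => Gf (θ, r) := hGf.comp measurable_prodMk_left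
        have e2 : (∫⁻ r in Ioc ρ 1,
              (c2 * (if |r| < 1 then ENNReal.ofReal (‖F n (circ r θ)‖ ^ p) else 0)
                + c2 * Gf (θ, r)))
            = c2 * (∫⁻ r in Ioc ρ 1,
                (if |r| < 1 then ENNReal.ofReal (‖F n (circ r θ)‖ ^ p) else 0))
              + c2 * ∫⁻ r in Ioc ρ 1, Gf (θ, r) := by
          rw [lintegral_add_left (hm1.const_mul c2), lintegral_const_mul c2 hm1,
            lintegral_const_mul c2 hm2]
        have e3 : (∫⁻ r in Ioc ρ 1,
              (if |r| < 1 then ENNReal.ofReal (‖F n (circ r θ)‖ ^ p) else 0))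
            ≤ ENNReal.ofReal 2 * ∫⁻ r in Ioc ρ₁ 1, Gf (θ, r) := by
          rw [← aux_inner_eq p (F n) measurableSet_Ioc (Ioc_subset_Ioc_left hρ0.le) θ,
            hscale n θ ρ 1, mul_one]
          refine mul_le_mul' (ENNReal.ofReal_le_ofReal ?_) ?_
          · have h12 : ((1:ℝ)/2)⁻¹ = 2 := by norm_num
            have := inv_anti₀ (by norm_num : (0:ℝ) < 1/2) (hahalf n)
            rw [h12] at this
            exact this
          · calc (∫⁻ s in Ioc (a n * ρ) (a n), ENNReal.ofReal (‖f (circ s θ)‖ ^ p))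
                ≤ ∫⁻ s in Ioc ρ₁ 1, ENNReal.ofReal (‖f (circ s θ)‖ ^ p) :=
                  lintegral_mono_set (Ioc_subset_Ioc haρ (ha1 n).le)
              _ = ∫⁻ r in Ioc ρ₁ 1, Gf (θ, r) :=
                  aux_inner_eq p f measurableSet_Ioc (Ioc_subset_Ioc_left hρ₁0.le) θ
        have e4 : (∫⁻ r in Ioc ρ 1, Gf (θ, r)) ≤ ∫⁻ r in Ioc ρ₁ 1, Gf (θ, r) :=
          lintegral_mono_set (Ioc_subset_Ioc_left hρρ₁.le)
        calc (∫⁻ r in Ioc ρ 1, ENNReal.ofReal (‖F n (circ r θ) - f (circ r θ)‖ ^ p))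
            ≤ c2 * (∫⁻ r in Ioc ρ 1,
                (if |r| < 1 then ENNReal.ofReal (‖F n (circ r θ)‖ ^ p) else 0))
              + c2 * ∫⁻ r in Ioc ρ 1, Gf (θ, r) := e1.trans_eq e2
          _ ≤ c2 * (ENNReal.ofReal 2 * ∫⁻ r in Ioc ρ₁ 1, Gf (θ, r))
              + c2 * ∫⁻ r in Ioc ρ₁ 1, Gf (θ, r) :=
              add_le_add (mul_le_mul' le_rfl e3) (mul_le_mul' le_rfl e4)
          _ = (c2 * ENNReal.ofReal 2 + c2) * ∫⁻ r in Ioc ρ₁ 1, Gf (θ, r) := by ring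
          _ ≤ K * ∫⁻ r in Ioc ρ₁ 1, Gf (θ, r) := by
              refine mul_le_mul' ?_ le_rfl
              have h2 : ENNReal.ofReal 2 = 2 := by norm_num
              rw [h2, hK_def]
              calc c2 * 2 + c2 = 3 * c2 := by ring
                _ ≤ 3 * c2 + 1 := le_self_add
      -- combine
      have hθbound : ∀ θ : ℝ, (∫⁻ r in Ioc (0:ℝ) 1,
          ENNReal.ofReal (‖F n (circ r θ) - f (circ r θ)‖ ^ p))
            ≤ ENNReal.ofReal (η ^ p) * ENNReal.ofReal ρ
              + K * ∫⁻ r in Ioc ρ₁ 1, Gf (θ, r) := by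
        intro θ
        rw [← Ioc_union_Ioc_eq_Ioc hρ0.le hρ1.le,
          lintegral_union measurableSet_Ioc (Ioc_disjoint_Ioc_of_le le_rfl)]
        exact add_le_add (hmain θ) (htail θ)
      calc (∫⁻ θ in Ioc (0:ℝ) (2*Real.pi), ∫⁻ r in Ioc (0:ℝ) 1,
            ENNReal.ofReal (‖F n (circ r θ) - f (circ r θ)‖ ^ p))
          ≤ ∫⁻ θ in Ioc (0:ℝ) (2*Real.pi),
              (ENNReal.ofReal (η ^ p) * ENNReal.ofReal ρ
                + K * ∫⁻ r in Ioc ρ₁ 1, Gf (θ, r)) :=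
            lintegral_mono_ae (Eventually.of_forall hθbound)
        _ = (ENNReal.ofReal (η ^ p) * ENNReal.ofReal ρ) * volume (Ioc (0:ℝ) (2*Real.pi))
            + K * ∫⁻ θ in Ioc (0:ℝ) (2*Real.pi), ∫⁻ r in Ioc ρ₁ 1, Gf (θ, r) := by
            rw [lintegral_add_left measurable_const, setLIntegral_const,
              lintegral_const_mul K (hGf.lintegral_prod_right')]
        _ ≤ ε/2 + ε/2 := by
            refine add_le_add ?_ ?_
            · have hv : volume (Ioc (0:ℝ) (2*Real.pi)) = ENNReal.ofReal (2*Real.pi) := by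
                rw [Real.volume_Ioc, sub_zero]
              rw [hv, mul_assoc]
              calc ENNReal.ofReal (η ^ p) * (ENNReal.ofReal ρ * ENNReal.ofReal (2*Real.pi))
                  ≤ δ₂ * W := mul_le_mul' hofηp le_self_add
                _ = ε/2 := by rw [hδ₂_def]; exact ENNReal.div_mul_cancel hW0 hWtop
            · have hTf : (∫⁻ θ in Ioc (0:ℝ) (2*Real.pi), ∫⁻ r in Ioc ρ₁ 1, Gf (θ, r))
                  ≤ (ε/2)/K := by
                refine le_trans (le_of_eq ?_) hT.le
                exact lintegral_congr fun θ =>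
                  (aux_inner_eq p f measurableSet_Ioc (Ioc_subset_Ioc_left hρ₁0.le) θ).symm
              calc K * (∫⁻ θ in Ioc (0:ℝ) (2*Real.pi), ∫⁻ r in Ioc ρ₁ 1, Gf (θ, r))
                  ≤ K * ((ε/2)/K) := mul_le_mul' le_rfl hTf
                _ = ε/2 := by rw [mul_comm]; exact ENNReal.div_mul_cancel hK0 hKtop
        _ = ε := ENNReal.add_halves ε
    have h1 := ENNReal.Tendsto.const_mul hD
      (Or.inr (ENNReal.ofReal_ne_top (r := 1/(2*Real.pi))))
    rw [mul_zero] at h1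
    have h2 := h1.ennrpow_const (1/p)
    rw [ENNReal.zero_rpow_of_pos hq] at h2
    exact h2
  · -- limsup bound
    have hbound3 : ∀ n, rhoInf p (F n)
        ≤ (ENNReal.ofReal (a n)⁻¹) ^ (1/p) * rhoInf p f := by
      intro n
      rw [rhoInf]
      refine iSup_le fun θ => ?_
      have h1 : ∫⁻ r in Ioc (0:ℝ) 1, ENNReal.ofReal (‖F n (circ r θ)‖ ^ p)
          ≤ ENNReal.ofReal (a n)⁻¹
              * ∫⁻ s in Ioc (0:ℝ) 1, ENNReal.ofReal (‖f (circ s θ)‖ ^ p) := by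
        rw [hscale n θ 0 1, mul_zero, mul_one]
        exact mul_le_mul' le_rfl (lintegral_mono_set (Ioc_subset_Ioc_right (ha1 n).le))
      calc (∫⁻ r in Ioc (0:ℝ) 1, ENNReal.ofReal (‖F n (circ r θ)‖ ^ p)) ^ (1/p)
          ≤ (ENNReal.ofReal (a n)⁻¹
              * ∫⁻ s in Ioc (0:ℝ) 1, ENNReal.ofReal (‖f (circ s θ)‖ ^ p)) ^ (1/p) :=
            ENNReal.rpow_le_rpow h1 hq.le
        _ = (ENNReal.ofReal (a n)⁻¹) ^ (1/p)
              * (∫⁻ s in Ioc (0:ℝ) 1, ENNReal.ofReal (‖f (circ s θ)‖ ^ p)) ^ (1/p) :=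
            ENNReal.mul_rpow_of_nonneg _ _ hq.le
        _ ≤ (ENNReal.ofReal (a n)⁻¹) ^ (1/p) * rhoInf p f := by
            refine mul_le_mul' le_rfl ?_
            exact le_iSup (fun θ : ℝ =>
              (∫⁻ r in Ioc (0:ℝ) 1, ENNReal.ofReal (‖f (circ r θ)‖ ^ p)) ^ (1/p)) θ
    have hc : Tendsto (fun n => (ENNReal.ofReal (a n)⁻¹) ^ (1/p) * rhoInf p f)
        atTop (nhds (rhoInf p f)) := by
      have h1 : Tendsto (fun n => (a n)⁻¹) atTop (nhds 1) := by
        have := hato1.inv₀ one_ne_zero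
        simpa using this
      have h2 : Tendsto (fun n => ENNReal.ofReal (a n)⁻¹) atTop (nhds 1) := by
        have := (ENNReal.continuous_ofReal.tendsto 1).comp h1
        simpa [Function.comp_def] using this
      have h3 := h2.ennrpow_const (1/p)
      rw [ENNReal.one_rpow] at h3
      have h4 := ENNReal.Tendsto.mul_const h3 (b := rhoInf p f) (Or.inl one_ne_zero)
      rwa [one_mul] at h4
    calc Filter.limsup (fun n => rhoInf p (F n)) atTop
        ≤ Filter.limsup (fun n => (ENNReal.ofReal (a n)⁻¹) ^ (1/p) * rhoInf p f) atTop :=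
          Filter.limsup_le_limsup (Eventually.of_forall hbound3)
      _ = rhoInf p f := hc.limsup_eq
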